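/- If Γ is a non-trivial connected admissible graph, then there exists a path P of Γ (of some color) such that the graph Γ∖P obtained by removing all edges of P has at most one non-trivial connected component. -/

import Mathlib

noncomputable section

open Filter Topology

/-- A finite, directed, edge-colored graph with colors in `Fin s`,
with vertices living in an ambient type `V`. -/
structure CGraph (V : Type) (s : ℕ) where
  verts : Set V
  finite : verts.Finite
  nonem : verts.Nonempty
  E : Fin s → V → V → Prop
  memL : ∀ r a b, E r a b → a ∈ verts
  memR : ∀ r a b, E r a b → b ∈ verts

namespace CGraph

variable {V W : Type} {s : ℕ}

/-- A graph is trivial iff it has no edges (of any color). -/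
def Trivial (Γ : CGraph V s) : Prop := ∀ r a b, ¬ Γ.E r a b

/-- Two vertices are adjacent iff there is an edge (of any color, either direction)
between them. -/
def Adj (Γ : CGraph V s) (a b : V) : Prop := ∃ r, Γ.E r a b ∨ Γ.E r b a

/-- A graph is connected iff any two of its vertices are joined by a finite chain of
edges (of any colors and either direction). -/
def Connected (Γ : CGraph V s) : Prop :=
  ∀ a ∈ Γ.verts, ∀ b ∈ Γ.verts, Relation.ReflTransGen Γ.Adj a b

/-- `Γ'` is a subgraph of `Γ`. -/
def Subgraph (Γ' Γ : CGraph V s) : Prop :=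
  Γ'.verts ⊆ Γ.verts ∧ ∀ r a b, Γ'.E r a b → Γ.E r a b

/-- `C` is a connected component of `Γ`: a maximal connected subgraph. -/
def IsComponent (C Γ : CGraph V s) : Prop :=
  C.Subgraph Γ ∧ C.Connected ∧
    ∀ C' : CGraph V s, C'.Subgraph Γ → C'.Connected → C.Subgraph C' → C'.Subgraph C

/-- A graph is admissible iff no two distinct edges of the same color begin at the
same vertex or end at the same vertex. -/
def Admissible (Γ : CGraph V s) : Prop :=
  (∀ r a b b', Γ.E r a b → Γ.E r a b' → b = b') ∧
    (∀ r a a' b, Γ.E r a b → Γ.E r a' b → a = a')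

/-- `Γ.mono r` is `Γ` with all edges not of color `r` removed. -/
def mono (Γ : CGraph V s) (r : Fin s) : CGraph V s where
  verts := Γ.verts
  finite := Γ.finite
  nonem := Γ.nonem
  E := fun r' a b => r' = r ∧ Γ.E r' a b
  memL := fun r' a b h => Γ.memL r' a b h.2
  memR := fun r' a b h => Γ.memR r' a b h.2

/-- An `r`-path of `Γ` is a non-trivial connected component of `Γ.mono r`. -/
def IsRPath (P Γ : CGraph V s) (r : Fin s) : Prop :=
  P.IsComponent (Γ.mono r) ∧ ¬ P.Trivial

/-- A path of `Γ` is an `r`-path for some color `r`. -/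
def IsPathOf (P Γ : CGraph V s) : Prop := ∃ r, P.IsRPath Γ r

/-- A path is closed (a closed circuit) iff every one of its vertices has an
outgoing edge. -/
def Closed (P : CGraph V s) : Prop := ∀ a ∈ P.verts, ∃ r b, P.E r a b

/-- A loop of `Γ` is a path of `Γ` which is a closed circuit. -/
def IsLoopOf (P Γ : CGraph V s) : Prop := P.IsPathOf Γ ∧ P.Closed

/-- A string of `Γ` is a path of `Γ` which is not a loop. -/
def IsStringOf (P Γ : CGraph V s) : Prop := P.IsPathOf Γ ∧ ¬ P.Closed

/-- The number of edges of `Γ` (counting colors). -/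
def edgeCount (Γ : CGraph V s) : ℕ :=
  Nat.card {p : Fin s × V × V // Γ.E p.1 p.2.1 p.2.2}

/-- The number of loops (of any color) of `Γ`. -/
def loopCount (Γ : CGraph V s) : ℕ :=
  Nat.card {P : CGraph V s // P.IsLoopOf Γ}

/-- The number of vertices of `Γ`. -/
def vertCount (Γ : CGraph V s) : ℕ := Nat.card Γ.verts

/-- The loop-characteristic `χ(Γ) = V(Γ) - E(Γ) + L(Γ)`. -/
def chi (Γ : CGraph V s) : ℤ :=
  (Γ.vertCount : ℤ) - (Γ.edgeCount : ℤ) + (Γ.loopCount : ℤ)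

/-- `Γ.erase P` is the graph obtained from `Γ` by removing all edges of `P`. -/
def erase (Γ P : CGraph V s) : CGraph V s where
  verts := Γ.verts
  finite := Γ.finite
  nonem := Γ.nonem
  E := fun r a b => Γ.E r a b ∧ ¬ P.E r a b
  memL := fun r a b h => Γ.memL r a b h.1
  memR := fun r a b h => Γ.memR r a b h.1

/-- A graph is strongly admissible (w.r.t. `d : Fin s → ℕ∞`) iff it is admissible,
every `r`-loop has length `d r`, and every `r`-string has length `< d r`. -/
def StronglyAdmissible (d : Fin s → ℕ∞) (Γ : CGraph V s) : Prop :=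
  Γ.Admissible ∧ ∀ r P, IsRPath P Γ r →
    (P.Closed → (P.edgeCount : ℕ∞) = d r) ∧ (¬ P.Closed → (P.edgeCount : ℕ∞) < d r)

/-- The quotient of `Γ` by a partition (setoid) `π` of the ambient vertex type. -/
def quot (Γ : CGraph V s) (π : Setoid V) : CGraph (Quotient π) s where
  verts := Quotient.mk π '' Γ.verts
  finite := Γ.finite.image _
  nonem := Γ.nonem.image _
  E := fun r A B => ∃ a b, Γ.E r a b ∧ Quotient.mk π a = A ∧ Quotient.mk π b = B
  memL := fun r A B h => by
    obtain ⟨a, b, he, ha, hb⟩ := h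
    exact ⟨a, Γ.memL r a b he, ha⟩
  memR := fun r A B h => by
    obtain ⟨a, b, he, ha, hb⟩ := h
    exact ⟨b, Γ.memR r a b he, hb⟩

/-- `π` is a congruence of `Γ`: for any two edges of the same color, the source
blocks agree iff the target blocks agree. -/
def IsCongruence (Γ : CGraph V s) (π : Setoid V) : Prop :=
  ∀ r a₁ b₁ a₂ b₂, Γ.E r a₁ b₁ → Γ.E r a₂ b₂ → (π.r a₁ a₂ ↔ π.r b₁ b₂)

/-- `π` is a strong congruence of `Γ`: a congruence whose quotient is strongly
admissible. -/
def IsStrongCongruence (d : Fin s → ℕ∞) (Γ : CGraph V s) (π : Setoid V) : Prop :=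
  Γ.IsCongruence π ∧ (Γ.quot π).StronglyAdmissible d

/-- Isomorphism of edge-colored graphs: a bijection between the vertex sets
preserving the `r`-edges in both directions, for every color `r`. -/
def Iso (Γ₁ : CGraph V s) (Γ₂ : CGraph W s) : Prop :=
  ∃ Φ : V → W, Set.BijOn Φ Γ₁.verts Γ₂.verts ∧
    ∀ r a b, a ∈ Γ₁.verts → b ∈ Γ₁.verts → (Γ₂.E r (Φ a) (Φ b) ↔ Γ₁.E r a b)

end CGraph

open Relation

section Noncut
variable {α : Type} (A : α → α → Prop)

private def steps : ℕ → α → α → Prop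
  | 0, x, y => x = y
  | (n+1), x, y => ∃ z, steps n x z ∧ A z y

private lemma steps_of_rtg {x y : α} (h : ReflTransGen A x y) : ∃ n, steps A n x y := by
  induction h with
  | refl => exact ⟨0, rfl⟩
  | tail _ hstep ih => obtain ⟨n, hn⟩ := ih; exact ⟨n+1, _, hn, hstep⟩

lemma noncut [Finite α] [Nonempty α] (hsym : Symmetric A)
    (hconn : ∀ x y, ReflTransGen A x y) :
    ∃ x : α, ∀ y z, y ≠ x → z ≠ x →
      ReflTransGen (fun u v => A u v ∧ u ≠ x ∧ v ≠ x) y z := by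
  classical
  obtain ⟨x0⟩ := ‹Nonempty α›
  have hex : ∀ y : α, ∃ n, steps A n x0 y := fun y => steps_of_rtg A (hconn x0 y)
  set d : α → ℕ := fun y => Nat.find (hex y) with hd
  obtain ⟨x, hx⟩ := Finite.exists_max d
  refine ⟨x, ?_⟩
  have key : ∀ n, ∀ y, d y = n → y ≠ x → ReflTransGen (fun u v => A u v ∧ u ≠ x ∧ v ≠ x) x0 y := by
    intro n
    induction n using Nat.strong_induction_on with
    | _ n ih =>
      intro y hdy hyx
      have hsy : steps A (d y) x0 y := Nat.find_spec (hex y)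
      match n, hdy with
      | 0, hdy => rw [hdy] at hsy; exact hsy ▸ ReflTransGen.refl
      | (m+1), hdy =>
        rw [hdy] at hsy
        obtain ⟨z, hz, hzy⟩ := hsy
        have hdz : d z ≤ m := Nat.find_min' (hex z) hz
        have hzx : z ≠ x := by
          rintro rfl
          have := hx y
          omega
        have := ih (d z) (by omega) z rfl hzx
        exact this.tail ⟨hzy, hzx, hyx⟩
  intro y z hy hz
  have h1 := key (d y) y rfl hy
  have h2 := key (d z) z rfl hz
  have hs2 : Symmetric fun u v => A u v ∧ u ≠ x ∧ v ≠ x := fun u v ⟨h, h1, h2⟩ => ⟨hsym h, h2, h1⟩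
  exact ((@ReflTransGen.symmetric _ _ ⟨hs2⟩).symm _ _ h1).trans h2

end Noncut

namespace CGraph

variable {V : Type} {s : ℕ}

lemma adj_symm (Δ : CGraph V s) : Symmetric Δ.Adj := fun _ _ ⟨r, h⟩ => ⟨r, h.symm⟩

lemma rtg_adj_symm (Δ : CGraph V s) {x y : V} (h : Relation.ReflTransGen Δ.Adj x y) :
    Relation.ReflTransGen Δ.Adj y x := (@Relation.ReflTransGen.symmetric _ _ ⟨Δ.adj_symm⟩).symm _ _ h

/-- The connected component of a vertex. -/
def compOf (Δ : CGraph V s) (a : V) (ha : a ∈ Δ.verts) : CGraph V s where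
  verts := {x | x ∈ Δ.verts ∧ Relation.ReflTransGen Δ.Adj a x}
  finite := Δ.finite.subset (fun _ hx => hx.1)
  nonem := ⟨a, ha, Relation.ReflTransGen.refl⟩
  E := fun r x y => Δ.E r x y ∧ Relation.ReflTransGen Δ.Adj a x
  memL := fun r x y h => ⟨Δ.memL r x y h.1, h.2⟩
  memR := fun r x y h => ⟨Δ.memR r x y h.1, h.2.tail ⟨r, Or.inl h.1⟩⟩

lemma compOf_reach (Δ : CGraph V s) (a : V) (ha : a ∈ Δ.verts) {x : V}
    (hx : Relation.ReflTransGen Δ.Adj a x) :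
    Relation.ReflTransGen (Δ.compOf a ha).Adj a x := by
  induction hx with
  | refl => exact .refl
  | tail hab hstep ih =>
    rename_i b c
    obtain ⟨r, h | h⟩ := hstep
    · exact ih.tail ⟨r, Or.inl ⟨h, hab⟩⟩
    · exact ih.tail ⟨r, Or.inr ⟨h, hab.tail ⟨r, Or.inr h⟩⟩⟩

lemma compOf_isComponent (Δ : CGraph V s) (a : V) (ha : a ∈ Δ.verts) :
    (Δ.compOf a ha).IsComponent Δ := by
  refine ⟨⟨fun x hx => hx.1, fun r x y h => h.1⟩, ?_, ?_⟩
  · rintro x ⟨hx1, hx2⟩ y ⟨hy1, hy2⟩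
    exact ((Δ.compOf a ha).rtg_adj_symm (Δ.compOf_reach a ha hx2)).trans
      (Δ.compOf_reach a ha hy2)
  · rintro C' ⟨hCv, hCE⟩ hCconn ⟨hsv, hsE⟩
    have haC' : a ∈ C'.verts := hsv ⟨ha, .refl⟩
    constructor
    · intro v hv
      refine ⟨hCv hv, ?_⟩
      exact Relation.ReflTransGen.mono (fun x y ⟨r, h⟩ =>
        ⟨r, h.imp (hCE r x y) (hCE r y x)⟩) _ _ (hCconn a haC' v hv)
    · intro r x y h
      have hx : x ∈ C'.verts := C'.memL r x y h
      refine ⟨hCE r x y h, ?_⟩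
      exact Relation.ReflTransGen.mono (fun u v ⟨r', h'⟩ =>
        ⟨r', h'.imp (hCE r' u v) (hCE r' v u)⟩) _ _ (hCconn a haC' x hx)

lemma comp_closed_vert {C Δ : CGraph V s} (hC : C.IsComponent Δ) {x y : V}
    (hx : x ∈ C.verts) (hxy : Δ.Adj x y) : y ∈ C.verts := by
  obtain ⟨r, hr⟩ := hxy
  have hyΔ : y ∈ Δ.verts := hr.elim (Δ.memR r x y) (Δ.memL r y x)
  set C'' : CGraph V s :=
    { verts := insert y C.verts
      finite := C.finite.insert y
      nonem := ⟨y, Set.mem_insert y _⟩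
      E := fun r' u v => C.E r' u v ∨ (r' = r ∧ ((u = x ∧ v = y ∧ Δ.E r x y) ∨ (u = y ∧ v = x ∧ Δ.E r y x)))
      memL := by
        rintro r' u v (h | ⟨rfl, ⟨rfl, rfl, h⟩ | ⟨rfl, rfl, h⟩⟩)
        · exact Set.mem_insert_of_mem _ (C.memL r' u v h)
        · exact Set.mem_insert_of_mem _ hx
        · exact Set.mem_insert _ _
      memR := by
        rintro r' u v (h | ⟨rfl, ⟨rfl, rfl, h⟩ | ⟨rfl, rfl, h⟩⟩)
        · exact Set.mem_insert_of_mem _ (C.memR r' u v h)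
        · exact Set.mem_insert _ _
        · exact Set.mem_insert_of_mem _ hx }
  have hsub : C.Subgraph C'' := ⟨Set.subset_insert _ _, fun r' u v h => Or.inl h⟩
  have hadjyx : C''.Adj y x := by
    rcases hr with h | h
    · exact ⟨r, Or.inr (Or.inr ⟨rfl, Or.inl ⟨rfl, rfl, h⟩⟩)⟩
    · exact ⟨r, Or.inl (Or.inr ⟨rfl, Or.inr ⟨rfl, rfl, h⟩⟩)⟩
  have hconn'' : C''.Connected := by
    have hmono : ∀ u v, C.Adj u v → C''.Adj u v := fun u v ⟨r', h⟩ =>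
      ⟨r', h.imp Or.inl Or.inl⟩
    have hto : ∀ v ∈ C''.verts, Relation.ReflTransGen C''.Adj x v := by
      rintro v (rfl | hv)
      · exact Relation.ReflTransGen.single (C''.adj_symm hadjyx)
      · exact Relation.ReflTransGen.mono hmono _ _ (hC.2.1 x hx v hv)
    intro u hu v hv
    exact ((C''.rtg_adj_symm (hto u hu))).trans (hto v hv)
  have hsub'' : C''.Subgraph Δ := by
    refine ⟨?_, ?_⟩
    · rintro v (rfl | hv)
      · exact hyΔ
      · exact hC.1.1 hv
    · rintro r' u v (h | ⟨rfl, ⟨rfl, rfl, h⟩ | ⟨rfl, rfl, h⟩⟩)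
      · exact hC.1.2 r' u v h
      · exact h
      · exact h
  exact (hC.2.2 C'' hsub'' hconn'' hsub).1 (Set.mem_insert y _)

lemma comp_reach_mem {C Δ : CGraph V s} (hC : C.IsComponent Δ) {x y : V}
    (hx : x ∈ C.verts) (hxy : Relation.ReflTransGen Δ.Adj x y) : y ∈ C.verts := by
  induction hxy with
  | refl => exact hx
  | tail _ hstep ih => exact comp_closed_vert hC ih hstep

lemma comp_induced {C Δ : CGraph V s} (hC : C.IsComponent Δ) {r : Fin s} {x y : V}
    (hx : x ∈ C.verts) (hy : y ∈ C.verts) (h : Δ.E r x y) : C.E r x y := by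
  set C'' : CGraph V s :=
    { verts := C.verts
      finite := C.finite
      nonem := C.nonem
      E := fun r' u v => C.E r' u v ∨ (Δ.E r' u v ∧ u ∈ C.verts ∧ v ∈ C.verts)
      memL := by
        rintro r' u v (h | ⟨h, hu, hv⟩)
        · exact C.memL r' u v h
        · exact hu
      memR := by
        rintro r' u v (h | ⟨h, hu, hv⟩)
        · exact C.memR r' u v h
        · exact hv }
  have hconn'' : C''.Connected := fun u hu v hv =>
    Relation.ReflTransGen.mono (fun a b ⟨r', h⟩ => ⟨r', h.imp Or.inl Or.inl⟩) _ _ (hC.2.1 u hu v hv)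
  have hsub'' : C''.Subgraph Δ := by
    refine ⟨hC.1.1, ?_⟩
    rintro r' u v (h | ⟨h, _, _⟩)
    · exact hC.1.2 r' u v h
    · exact h
  have := (hC.2.2 C'' hsub'' hconn'' ⟨le_refl _, fun r' u v h => Or.inl h⟩).2
  exact this r x y (Or.inr ⟨h, hx, hy⟩)

end CGraph

namespace CGraph

variable {V : Type} {s : ℕ}

/-- The edges of `Γ` as a type. -/
def Edg (Γ : CGraph V s) := {p : Fin s × V × V // Γ.E p.1 p.2.1 p.2.2}

lemma finite_edg (Γ : CGraph V s) : Finite Γ.Edg := by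
  have : Finite Γ.verts := Γ.finite.to_subtype
  apply Finite.of_injective
    (fun e : Γ.Edg => ((e.1.1 : Fin s),
      (⟨e.1.2.1, Γ.memL _ _ _ e.2⟩ : Γ.verts), (⟨e.1.2.2, Γ.memR _ _ _ e.2⟩ : Γ.verts)))
  rintro ⟨⟨r, a, b⟩, h⟩ ⟨⟨r', a', b'⟩, h'⟩ heq
  simp only [Prod.mk.injEq, Subtype.mk.injEq] at heq
  obtain ⟨rfl, rfl, rfl⟩ := heq; rfl

/-- Reachability within color `r`. -/
def reach (Γ : CGraph V s) (r : Fin s) (x y : V) : Prop :=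
  Relation.ReflTransGen (Γ.mono r).Adj x y

lemma reach_symm (Γ : CGraph V s) {r : Fin s} {x y : V} (h : Γ.reach r x y) :
    Γ.reach r y x := (Γ.mono r).rtg_adj_symm h

lemma mono_adj_iff (Γ : CGraph V s) {r : Fin s} {x y : V} :
    (Γ.mono r).Adj x y ↔ (Γ.E r x y ∨ Γ.E r y x) := by
  constructor
  · rintro ⟨r', ⟨rfl, h⟩ | ⟨rfl, h⟩⟩
    · exact Or.inl h
    · exact Or.inr h
  · rintro (h | h)
    · exact ⟨r, Or.inl ⟨rfl, h⟩⟩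
    · exact ⟨r, Or.inr ⟨rfl, h⟩⟩

/-- Two edges lie on the same path. -/
def samePath (Γ : CGraph V s) (e f : Γ.Edg) : Prop :=
  e.1.1 = f.1.1 ∧ Γ.reach e.1.1 e.1.2.1 f.1.2.1

/-- The setoid on edges whose classes are the paths. -/
def pathSetoid (Γ : CGraph V s) : Setoid Γ.Edg where
  r := Γ.samePath
  iseqv := by
    constructor
    · exact fun e => ⟨rfl, Relation.ReflTransGen.refl⟩
    · rintro e f ⟨h1, h2⟩
      exact ⟨h1.symm, h1 ▸ Γ.reach_symm h2⟩
    · rintro e f g ⟨h1, h2⟩ ⟨h3, h4⟩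
      exact ⟨h1.trans h3, h2.trans (h1 ▸ h4)⟩

/-- The path through an edge. -/
def pathOf (Γ : CGraph V s) (e : Γ.Edg) : CGraph V s :=
  (Γ.mono e.1.1).compOf e.1.2.1 (Γ.memL _ _ _ e.2)

lemma pathOf_isPath (Γ : CGraph V s) (e : Γ.Edg) : (Γ.pathOf e).IsPathOf Γ := by
  refine ⟨e.1.1, compOf_isComponent _ _ _, ?_⟩
  intro h
  exact h e.1.1 e.1.2.1 e.1.2.2 ⟨⟨rfl, e.2⟩, Relation.ReflTransGen.refl⟩

lemma pathOf_E_iff (Γ : CGraph V s) (e₀ : Γ.Edg) {r : Fin s} {x y : V} :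
    (Γ.pathOf e₀).E r x y ↔ ((r = e₀.1.1 ∧ Γ.E r x y) ∧ Γ.reach e₀.1.1 e₀.1.2.1 x) :=
  Iff.rfl

lemma survive_iff (Γ : CGraph V s) (e₀ : Γ.Edg) {r : Fin s} {x y : V} (h : Γ.E r x y) :
    (Γ.erase (Γ.pathOf e₀)).E r x y ↔ ¬ (r = e₀.1.1 ∧ Γ.reach e₀.1.1 e₀.1.2.1 x) := by
  constructor
  · rintro ⟨-, hn⟩ ⟨h1, h2⟩
    exact hn ⟨⟨h1, h⟩, h2⟩
  · intro hn
    exact ⟨h, fun hh => hn ⟨hh.1.1, hh.2⟩⟩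

/-- Reachability within a surviving path transfers to the erased graph. -/
lemma reach_erase (Γ : CGraph V s) (e₀ e : Γ.Edg) (hne : ¬ Γ.samePath e₀ e) {v : V}
    (hv : Γ.reach e.1.1 e.1.2.1 v) :
    Relation.ReflTransGen (Γ.erase (Γ.pathOf e₀)).Adj e.1.2.1 v := by
  induction hv with
  | refl => exact .refl
  | tail hxw hstep ih =>
    rename_i x w
    rcases (Γ.mono_adj_iff).1 hstep with h | h
    · have hs : (Γ.erase (Γ.pathOf e₀)).E e.1.1 x w := by
        rw [Γ.survive_iff e₀ h]
        rintro ⟨h1, h2⟩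
        have hxw' : Γ.reach e₀.1.1 x e.1.2.1 := by rw [← h1]; exact Γ.reach_symm hxw
        exact hne ⟨h1.symm, h2.trans hxw'⟩
      exact ih.tail ⟨e.1.1, Or.inl hs⟩
    · have hs : (Γ.erase (Γ.pathOf e₀)).E e.1.1 w x := by
        rw [Γ.survive_iff e₀ h]
        rintro ⟨h1, h2⟩
        have hwx : Γ.reach e.1.1 w x := Relation.ReflTransGen.single ((Γ.mono_adj_iff).2 (Or.inl h))
        have hwe : Γ.reach e₀.1.1 w e.1.2.1 := by
          rw [← h1]; exact hwx.trans (Γ.reach_symm hxw)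
        exact hne ⟨h1.symm, h2.trans hwe⟩
      exact ih.tail ⟨e.1.1, Or.inr hs⟩

end CGraph

namespace CGraph

variable {V : Type} {s : ℕ}

/-- Adjacency of path-classes: the two paths share a vertex. -/
def classAdj (Γ : CGraph V s) (c d : Quotient Γ.pathSetoid) : Prop :=
  ∃ e f : Γ.Edg, Quotient.mk Γ.pathSetoid e = c ∧ Quotient.mk Γ.pathSetoid f = d ∧
    ∃ v, Γ.reach e.1.1 e.1.2.1 v ∧ Γ.reach f.1.1 f.1.2.1 v

lemma classAdj_symm (Γ : CGraph V s) : Symmetric Γ.classAdj := by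
  rintro c d ⟨e, f, he, hf, v, hv1, hv2⟩
  exact ⟨f, e, hf, he, v, hv2, hv1⟩

lemma classAdj_conn_aux (Γ : CGraph V s) (e : Γ.Edg) {y : V}
    (h : Relation.ReflTransGen Γ.Adj e.1.2.1 y) :
    ∀ f : Γ.Edg, Γ.reach f.1.1 f.1.2.1 y →
      Relation.ReflTransGen Γ.classAdj (Quotient.mk Γ.pathSetoid e)
        (Quotient.mk Γ.pathSetoid f) := by
  induction h with
  | refl =>
    intro f hf
    exact Relation.ReflTransGen.single
      ⟨e, f, rfl, rfl, e.1.2.1, Relation.ReflTransGen.refl, hf⟩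
  | tail hex hstep ih =>
    rename_i x y
    intro f hf
    obtain ⟨r, h' | h'⟩ := hstep
    · set g : Γ.Edg := ⟨(r, x, y), h'⟩
      have h1 := ih g Relation.ReflTransGen.refl
      have h2 : Γ.classAdj (Quotient.mk Γ.pathSetoid g) (Quotient.mk Γ.pathSetoid f) :=
        ⟨g, f, rfl, rfl, y,
          Relation.ReflTransGen.single ((Γ.mono_adj_iff).2 (Or.inl h')), hf⟩
      exact h1.tail h2
    · set g : Γ.Edg := ⟨(r, y, x), h'⟩
      have h1 := ih g (Relation.ReflTransGen.single ((Γ.mono_adj_iff).2 (Or.inl h')))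
      have h2 : Γ.classAdj (Quotient.mk Γ.pathSetoid g) (Quotient.mk Γ.pathSetoid f) :=
        ⟨g, f, rfl, rfl, y, Relation.ReflTransGen.refl, hf⟩
      exact h1.tail h2

lemma classAdj_conn (Γ : CGraph V s) (hconn : Γ.Connected) :
    ∀ c d, Relation.ReflTransGen Γ.classAdj c d := by
  intro c d
  obtain ⟨e, rfl⟩ := Quotient.exists_rep c
  obtain ⟨f, rfl⟩ := Quotient.exists_rep d
  exact Γ.classAdj_conn_aux e
    (hconn e.1.2.1 (Γ.memL _ _ _ e.2) f.1.2.1 (Γ.memL _ _ _ f.2)) f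
    Relation.ReflTransGen.refl

end CGraph

theorem exists_path_removal_at_most_one_nontrivial_component' {V : Type} {s : ℕ}
    (hs : 0 < s) (Γ : CGraph V s) (hnt : ¬ Γ.Trivial) (hconn : Γ.Connected)
    (hadm : Γ.Admissible) :
    ∃ P : CGraph V s, P.IsPathOf Γ ∧
      ∀ C C' : CGraph V s, C.IsComponent (Γ.erase P) → C'.IsComponent (Γ.erase P) →
        ¬ C.Trivial → ¬ C'.Trivial →
          C.verts = C'.verts ∧ ∀ r a b, C.E r a b ↔ C'.E r a b := by
  classical
  have hnt' : ∃ r a b, Γ.E r a b := by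
    by_contra hcon; push_neg at hcon; exact hnt fun r a b => hcon r a b
  obtain ⟨r1, a1, b1, he1⟩ := hnt'
  haveI : Finite Γ.Edg := Γ.finite_edg
  haveI : Nonempty (Quotient Γ.pathSetoid) :=
    ⟨Quotient.mk Γ.pathSetoid ⟨(r1, a1, b1), he1⟩⟩
  haveI : Finite (Quotient Γ.pathSetoid) := Quotient.finite _
  obtain ⟨cstar, hstar⟩ := noncut Γ.classAdj (Γ.classAdj_symm) (Γ.classAdj_conn hconn)
  obtain ⟨e₀, he₀⟩ := Quotient.exists_rep cstar
  refine ⟨Γ.pathOf e₀, Γ.pathOf_isPath e₀, ?_⟩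
  set Δ := Γ.erase (Γ.pathOf e₀) with hΔdef
  -- transfer: connectivity of classes avoiding cstar transfers to Δ
  have transfer : ∀ (e : Γ.Edg), Quotient.mk Γ.pathSetoid e ≠ cstar →
      ∀ (d : Quotient Γ.pathSetoid),
      Relation.ReflTransGen (fun u v => Γ.classAdj u v ∧ u ≠ cstar ∧ v ≠ cstar)
        (Quotient.mk Γ.pathSetoid e) d →
      ∀ f : Γ.Edg, Quotient.mk Γ.pathSetoid f = d →
        Relation.ReflTransGen Δ.Adj e.1.2.1 f.1.2.1 := by
    intro e hce d hrtg
    have hne0 : ¬ Γ.samePath e₀ e := fun hsp => hce (by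
      rw [← he₀]; exact (Quotient.sound hsp).symm)
    induction hrtg with
    | refl =>
      intro f hf
      have hsp : Γ.samePath e f := Γ.pathSetoid.symm (Quotient.exact hf)
      exact Γ.reach_erase e₀ e hne0 hsp.2
    | tail hcx hstep ih =>
      rename_i x d0
      obtain ⟨hadj, hx, hd⟩ := hstep
      obtain ⟨g, h, hgq, hhq, v, hg, hh⟩ := hadj
      intro f hf
      have h1 := ih g hgq
      have hgne : ¬ Γ.samePath e₀ g := fun hsp => hx (by
        rw [← hgq, ← he₀]; exact (Quotient.sound hsp).symm)
      have hhne : ¬ Γ.samePath e₀ h := fun hsp => hd (by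
        rw [← hhq, ← he₀]; exact (Quotient.sound hsp).symm)
      have h2 : Relation.ReflTransGen Δ.Adj g.1.2.1 v := Γ.reach_erase e₀ g hgne hg
      have h3 : Relation.ReflTransGen Δ.Adj h.1.2.1 v := Γ.reach_erase e₀ h hhne hh
      have hsp : Γ.samePath h f := Quotient.exact (hhq.trans hf.symm)
      have h4 : Relation.ReflTransGen Δ.Adj h.1.2.1 f.1.2.1 :=
        Γ.reach_erase e₀ h hhne hsp.2
      exact ((h1.trans h2).trans (Δ.rtg_adj_symm h3)).trans h4
  intro C C' hC hC' hCnt hC'nt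
  have hCE : ∃ r a b, C.E r a b := by
    by_contra hcon; push_neg at hcon; exact hCnt fun r a b => hcon r a b
  have hC'E : ∃ r a b, C'.E r a b := by
    by_contra hcon; push_neg at hcon; exact hC'nt fun r a b => hcon r a b
  obtain ⟨r, a, b, hab⟩ := hCE
  obtain ⟨r', a', b', hab'⟩ := hC'E
  have hΔab : Δ.E r a b := hC.1.2 r a b hab
  have hΔab' : Δ.E r' a' b' := hC'.1.2 r' a' b' hab'
  set eC : Γ.Edg := ⟨(r, a, b), hΔab.1⟩ with heC
  set eC' : Γ.Edg := ⟨(r', a', b'), hΔab'.1⟩ with heC'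
  have hCne : Quotient.mk Γ.pathSetoid eC ≠ cstar := by
    rw [← he₀]; intro hq
    have hsp : Γ.samePath e₀ eC := Quotient.exact hq.symm
    exact hΔab.2 ⟨⟨hsp.1.symm, hΔab.1⟩, hsp.2⟩
  have hC'ne : Quotient.mk Γ.pathSetoid eC' ≠ cstar := by
    rw [← he₀]; intro hq
    have hsp : Γ.samePath e₀ eC' := Quotient.exact hq.symm
    exact hΔab'.2 ⟨⟨hsp.1.symm, hΔab'.1⟩, hsp.2⟩
  have hrtgq := hstar (Quotient.mk Γ.pathSetoid eC) (Quotient.mk Γ.pathSetoid eC')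
    hCne hC'ne
  have hmain : Relation.ReflTransGen Δ.Adj a a' :=
    transfer eC hCne _ hrtgq eC' rfl
  have haC : a ∈ C.verts := C.memL r a b hab
  have ha'C' : a' ∈ C'.verts := C'.memL r' a' b' hab'
  have ha'C : a' ∈ C.verts := CGraph.comp_reach_mem hC haC hmain
  have haC' : a ∈ C'.verts := CGraph.comp_reach_mem hC' ha'C' (Δ.rtg_adj_symm hmain)
  have hCadjΔ : ∀ u v, C.Adj u v → Δ.Adj u v := fun u v ⟨r0, h0⟩ =>
    ⟨r0, h0.imp (hC.1.2 r0 u v) (hC.1.2 r0 v u)⟩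
  have hC'adjΔ : ∀ u v, C'.Adj u v → Δ.Adj u v := fun u v ⟨r0, h0⟩ =>
    ⟨r0, h0.imp (hC'.1.2 r0 u v) (hC'.1.2 r0 v u)⟩
  have hsub1 : C.verts ⊆ C'.verts := fun v hv =>
    CGraph.comp_reach_mem hC' haC' (Relation.ReflTransGen.mono hCadjΔ _ _ (hC.2.1 a haC v hv))
  have hsub2 : C'.verts ⊆ C.verts := fun v hv =>
    CGraph.comp_reach_mem hC ha'C (Relation.ReflTransGen.mono hC'adjΔ _ _ (hC'.2.1 a' ha'C' v hv))
  refine ⟨Set.Subset.antisymm hsub1 hsub2, ?_⟩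
  intro r0 x y
  constructor
  · intro h
    exact CGraph.comp_induced hC' (hsub1 (C.memL _ _ _ h)) (hsub1 (C.memR _ _ _ h))
      (hC.1.2 _ _ _ h)
  · intro h
    exact CGraph.comp_induced hC (hsub2 (C'.memL _ _ _ h)) (hsub2 (C'.memR _ _ _ h))
      (hC'.1.2 _ _ _ h)

/-- If `Γ` is a non-trivial connected admissible graph, then there is a path `P`
of `Γ` such that `Γ ∖ P` has at most one non-trivial connected component. -/
theorem exists_path_removal_at_most_one_nontrivial_component {V : Type} {s : ℕ}
    (hs : 0 < s) (Γ : CGraph V s) (hnt : ¬ Γ.Trivial) (hconn : Γ.Connected)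
    (hadm : Γ.Admissible) :
    ∃ P : CGraph V s, P.IsPathOf Γ ∧
      ∀ C C' : CGraph V s, C.IsComponent (Γ.erase P) → C'.IsComponent (Γ.erase P) →
        ¬ C.Trivial → ¬ C'.Trivial →
          C.verts = C'.verts ∧ ∀ r a b, C.E r a b ↔ C'.E r a b := by
  exact exists_path_removal_at_most_one_nontrivial_component' hs Γ hnt hconn hadm
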